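/- Let F be an algebraically closed field of characteristic 0, V a 2-dimensional F-vector space with a fixed nonzero alternating bilinear form ⟨·|·⟩, and for u, v ∈ V define s_{u,v} ∈ End(V) by s_{u,v}(w) = ½(⟨w|u⟩v + ⟨w|v⟩u); each s_{u,v} has trace zero. If f : V × V → 𝔰𝔩(V) is a bilinear map that is SL(V)-equivariant, i.e. f(g u, g v) = g ∘ f(u, v) ∘ g⁻¹ for all g ∈ SL(V) and u, v ∈ V, then there exists λ ∈ F with f(u, v) = λ·s_{u,v} for all u, v ∈ V. -/

import Mathlib

/-- The endomorphism `s_{u,v} : w ↦ ½(⟨w|u⟩v + ⟨w|v⟩u)` attached to a bilinear form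
`ω = ⟨·|·⟩` on `V` and vectors `u, v ∈ V`. -/
noncomputable def sMap {F V : Type*} [Field F] [AddCommGroup V] [Module F V]
    (ω : V →ₗ[F] V →ₗ[F] F) (u v : V) : Module.End F V :=
  (2⁻¹ : F) • ((ω.flip u).smulRight v + (ω.flip v).smulRight u)

/-- Each `s_{u,v}` has trace zero, and any `SL(V)`-equivariant bilinear map
`V × V → 𝔰𝔩(V)`, for a `2`-dimensional vector space `V` over an algebraically closed
field of characteristic zero, is a scalar multiple of `(u, v) ↦ s_{u,v}`. -/
theorem equivariant_map_to_sl_is_multiple_of_sMap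
    {F V : Type*} [Field F] [IsAlgClosed F] [CharZero F]
    [AddCommGroup V] [Module F V] (hdim : Module.finrank F V = 2)
    (ω : V →ₗ[F] V →ₗ[F] F) (hω_alt : ∀ v, ω v v = 0) (hω_ne : ω ≠ 0)
    (f : V →ₗ[F] V →ₗ[F] Module.End F V)
    (hf_sl : ∀ u v : V, LinearMap.trace F V (f u v) = 0)
    (hf : ∀ g : V ≃ₗ[F] V, LinearMap.det (g : V →ₗ[F] V) = 1 →
      ∀ u v : V, f (g u) (g v) = g.toLinearMap ∘ₗ f u v ∘ₗ g.symm.toLinearMap) :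
    (∀ u v : V, LinearMap.trace F V (sMap ω u v) = 0) ∧
      ∃ c : F, ∀ u v : V, f u v = c • sMap ω u v := by
  haveI : FiniteDimensional F V := FiniteDimensional.of_finrank_eq_succ hdim
  have hskew : ∀ u v : V, ω v u = - ω u v := by
    intro u v
    have h := hω_alt (u + v)
    simp only [map_add, LinearMap.add_apply, hω_alt u, hω_alt v] at h
    linear_combination h
  obtain ⟨u₀, hu₀⟩ : ∃ u, ω u ≠ 0 := by
    by_contra h; push_neg at h; exact hω_ne (LinearMap.ext h)
  obtain ⟨v₀, hv₀⟩ : ∃ v, ω u₀ v ≠ 0 := by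
    by_contra h; push_neg at h; exact hu₀ (LinearMap.ext h)
  set e₁ := u₀ with he₁
  set e₂ := (ω u₀ v₀)⁻¹ • v₀ with he₂
  have he : ω e₁ e₂ = 1 := by
    simp [he₂, map_smul, inv_mul_cancel₀ hv₀]
    exact inv_mul_cancel₀ hv₀
  have hind : LinearIndependent F ![e₁, e₂] := by
    rw [LinearIndependent.pair_iff]
    intro s t hst
    have h1 := congrArg (fun w => ω w e₂) hst
    have h2 := congrArg (fun w => ω e₁ w) hst
    simp only [map_add, map_smul, LinearMap.add_apply, LinearMap.smul_apply, map_zero,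
      LinearMap.zero_apply, smul_eq_mul, he, hω_alt] at h1 h2
    constructor
    · simpa [he] using h1
    · simpa [he, hω_alt] using h2
  let b : Module.Basis (Fin 2) F V :=
    basisOfLinearIndependentOfCardEqFinrank hind (by simp [hdim])
  have hb0 : b 0 = e₁ := by
    simp [b, coe_basisOfLinearIndependentOfCardEqFinrank]
  have hb1 : b 1 = e₂ := by
    simp [b, coe_basisOfLinearIndependentOfCardEqFinrank]
  have w01 : ω (b 0) (b 1) = 1 := by rw [hb0, hb1]; exact he
  have w10 : ω (b 1) (b 0) = -1 := by rw [hskew, w01]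
  have hrep : ∀ w : V, w = b.repr w 0 • b 0 + b.repr w 1 • b 1 := by
    intro w
    have := b.sum_repr w
    rw [Fin.sum_univ_two] at this
    exact this.symm
  have hpair : ∀ s t : F, s • b 0 + t • b 1 = 0 → s = 0 ∧ t = 0 := by
    have h : LinearIndependent F ![b 0, b 1] := by
      have : ![b 0, b 1] = ![e₁, e₂] := by
        funext i; fin_cases i <;> simp [hb0, hb1]
      rw [this]; exact hind
    exact fun s t => LinearIndependent.pair_iff.mp h s t
  have hcoord : ∀ x y z w : F, x • b 0 + y • b 1 = z • b 0 + w • b 1 → x = z ∧ y = w := by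
    intro x y z w h
    have h2 : (x - z) • b 0 + (y - w) • b 1 = 0 := by
      rw [sub_smul, sub_smul, sub_add_sub_comm, h, sub_self]
    obtain ⟨h3, h4⟩ := hpair _ _ h2
    exact ⟨by linear_combination h3, by linear_combination h4⟩
  -- trace formula
  have htrace : ∀ X : Module.End F V,
      LinearMap.trace F V X = b.repr (X (b 0)) 0 + b.repr (X (b 1)) 1 := by
    intro X
    rw [LinearMap.trace_eq_matrix_trace F b, Matrix.trace, Fin.sum_univ_two]
    simp [Matrix.diag, LinearMap.toMatrix_apply]
  have w00 : ω (b 0) (b 0) = 0 := hω_alt _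
  have w11 : ω (b 1) (b 1) = 0 := hω_alt _
  have sMap_apply : ∀ u v w : V, sMap ω u v w = (2⁻¹:F) • ((ω w u) • v + (ω w v) • u) := by
    intro u v w
    simp [sMap, LinearMap.smulRight_apply, LinearMap.flip_apply]
  have hsum : ∀ u v : V, ω (b 0) u * b.repr v 0 + ω (b 1) u * b.repr v 1 = ω v u := by
    intro u v
    conv_rhs => rw [hrep v]
    simp only [map_add, map_smul, LinearMap.add_apply, LinearMap.smul_apply, smul_eq_mul]
    ring
  -- part 1: traces of sMap vanish
  have htr : ∀ u v : V, LinearMap.trace F V (sMap ω u v) = 0 := by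
    intro u v
    rw [htrace, sMap_apply, sMap_apply]
    simp only [map_add, map_smul, Finsupp.add_apply, Finsupp.smul_apply, smul_eq_mul]
    have h1 := hsum u v
    have h2 := hsum v u
    have h3 := hskew u v
    ring_nf
    ring_nf at h1 h2
    linear_combination (2⁻¹:F) * h1 + (2⁻¹:F) * h2 + (2⁻¹:F) * h3
  refine ⟨htr, ?_⟩
  -- equivariance in pointwise matrix form
  have hkey : ∀ (M : Matrix (Fin 2) (Fin 2) F), M.det = 1 →
      ∀ u v w : V, f (Matrix.toLin b b M u) (Matrix.toLin b b M v) (Matrix.toLin b b M w)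
        = Matrix.toLin b b M (f u v w) := by
    intro M hM u v w
    have hunit : IsUnit (LinearMap.toMatrix b b (Matrix.toLin b b M)).det := by
      rw [LinearMap.toMatrix_toLin, hM]; exact isUnit_one
    set g : V ≃ₗ[F] V := LinearEquiv.ofIsUnitDet hunit with hg
    have hgc : (g : V →ₗ[F] V) = Matrix.toLin b b M := LinearEquiv.coe_ofIsUnitDet hunit
    have hga : ∀ x, g x = Matrix.toLin b b M x := fun x => by rw [← hgc]; rfl
    have hdet : LinearMap.det (g : V →ₗ[F] V) = 1 := by
      rw [hgc, LinearMap.det_toLin]; exact hM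
    have h := congrArg (fun φ => φ (g w)) (hf g hdet u v)
    simp only [LinearMap.comp_apply, LinearEquiv.coe_coe, LinearEquiv.symm_apply_apply] at h
    rw [← hga, ← hga, ← hga, ← hga]
    exact h
  -- torus element
  set T : V →ₗ[F] V := Matrix.toLin b b !![(2:F), 0; 0, 2⁻¹] with hT
  have hTf : ∀ u v w : V, f (T u) (T v) (T w) = T (f u v w) := by
    rw [hT]
    exact hkey _ (by rw [Matrix.det_fin_two_of]; norm_num)
  have hT0 : T (b 0) = (2:F) • b 0 := by
    rw [hT, Matrix.toLin_self, Fin.sum_univ_two]; simp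
  have hT1 : T (b 1) = (2⁻¹:F) • b 1 := by
    rw [hT, Matrix.toLin_self, Fin.sum_univ_two]; simp
  have tor : ∀ i j k : Fin 2, ∀ ci cj ck : F, T (b i) = ci • b i → T (b j) = cj • b j →
      T (b k) = ck • b k →
      ci * (cj * (ck * b.repr (f (b i) (b j) (b k)) 0)) = 2 * b.repr (f (b i) (b j) (b k)) 0
      ∧ ci * (cj * (ck * b.repr (f (b i) (b j) (b k)) 1))
          = 2⁻¹ * b.repr (f (b i) (b j) (b k)) 1 := by
    intro i j k ci cj ck hi hj hk
    have E := hTf (b i) (b j) (b k)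
    rw [hi, hj, hk] at E
    simp only [map_smul, LinearMap.smul_apply] at E
    rw [hrep (f (b i) (b j) (b k))] at E
    simp only [map_add, map_smul, hT0, hT1] at E
    have E0 := congrArg (fun x => b.repr x 0) E
    have E1 := congrArg (fun x => b.repr x 1) E
    simp only [map_add, map_smul, Finsupp.add_apply, Finsupp.smul_apply, smul_eq_mul,
      Module.Basis.repr_self, Finsupp.single_apply, if_true, if_false, one_ne_zero, zero_ne_one,
      mul_one, mul_zero, add_zero, zero_add, reduceIte] at E0 E1
    exact ⟨by linear_combination E0, by linear_combination E1⟩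
  -- torus consequences
  have P000 := tor 0 0 0 2 2 2 hT0 hT0 hT0
  have P001 := tor 0 0 1 2 2 2⁻¹ hT0 hT0 hT1
  have P010 := tor 0 1 0 2 2⁻¹ 2 hT0 hT1 hT0
  have P011 := tor 0 1 1 2 2⁻¹ 2⁻¹ hT0 hT1 hT1
  have P100 := tor 1 0 0 2⁻¹ 2 2 hT1 hT0 hT0
  have P101 := tor 1 0 1 2⁻¹ 2 2⁻¹ hT1 hT0 hT1
  have P110 := tor 1 1 0 2⁻¹ 2⁻¹ 2 hT1 hT1 hT0
  have P111 := tor 1 1 1 2⁻¹ 2⁻¹ 2⁻¹ hT1 hT1 hT1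
  have z000a : b.repr (f (b 0) (b 0) (b 0)) 0 = 0 := by linear_combination P000.1 / 6
  have z000b : b.repr (f (b 0) (b 0) (b 0)) 1 = 0 := by linear_combination (2/15 : F) * P000.2
  have z001 : b.repr (f (b 0) (b 0) (b 1)) 1 = 0 := by linear_combination (2/3 : F) * P001.2
  have z010 : b.repr (f (b 0) (b 1) (b 0)) 1 = 0 := by linear_combination (2/3 : F) * P010.2
  have z011 : b.repr (f (b 0) (b 1) (b 1)) 0 = 0 := by linear_combination (-2/3 : F) * P011.1
  have z100 : b.repr (f (b 1) (b 0) (b 0)) 1 = 0 := by linear_combination (2/3 : F) * P100.2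
  have z101 : b.repr (f (b 1) (b 0) (b 1)) 0 = 0 := by linear_combination (-2/3 : F) * P101.1
  have z110 : b.repr (f (b 1) (b 1) (b 0)) 0 = 0 := by linear_combination (-2/3 : F) * P110.1
  have z111a : b.repr (f (b 1) (b 1) (b 1)) 0 = 0 := by
    linear_combination (-8/15 : F) * P111.1
  have z111b : b.repr (f (b 1) (b 1) (b 1)) 1 = 0 := by linear_combination (-8/3 : F) * P111.2
  -- trace consequences
  have tr01 : b.repr (f (b 0) (b 1) (b 1)) 1 = - b.repr (f (b 0) (b 1) (b 0)) 0 := by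
    have := hf_sl (b 0) (b 1)
    rw [htrace] at this
    linear_combination this
  have tr10 : b.repr (f (b 1) (b 0) (b 1)) 1 = - b.repr (f (b 1) (b 0) (b 0)) 0 := by
    have := hf_sl (b 1) (b 0)
    rw [htrace] at this
    linear_combination this
  -- vector forms with unknowns
  set α := b.repr (f (b 0) (b 1) (b 0)) 0 with hα
  set α' := b.repr (f (b 1) (b 0) (b 0)) 0 with hα'
  set β := b.repr (f (b 0) (b 0) (b 1)) 0 with hβ
  set γ := b.repr (f (b 1) (b 1) (b 0)) 1 with hγ
  have g000 : f (b 0) (b 0) (b 0) = 0 := by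
    conv_lhs => rw [hrep (f (b 0) (b 0) (b 0))]
    rw [z000a, z000b]; simp
  have g001 : f (b 0) (b 0) (b 1) = β • b 0 := by
    conv_lhs => rw [hrep (f (b 0) (b 0) (b 1))]
    rw [z001]; simp; rfl
  have g010 : f (b 0) (b 1) (b 0) = α • b 0 := by
    conv_lhs => rw [hrep (f (b 0) (b 1) (b 0))]
    rw [z010]; simp; rfl
  have g011 : f (b 0) (b 1) (b 1) = (-α) • b 1 := by
    conv_lhs => rw [hrep (f (b 0) (b 1) (b 1))]
    rw [z011, tr01]; simp
  have g100 : f (b 1) (b 0) (b 0) = α' • b 0 := by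
    conv_lhs => rw [hrep (f (b 1) (b 0) (b 0))]
    rw [z100]; simp; rfl
  have g101 : f (b 1) (b 0) (b 1) = (-α') • b 1 := by
    conv_lhs => rw [hrep (f (b 1) (b 0) (b 1))]
    rw [z101, tr10]; simp
  have g110 : f (b 1) (b 1) (b 0) = γ • b 1 := by
    conv_lhs => rw [hrep (f (b 1) (b 1) (b 0))]
    rw [z110]; simp; rfl
  have g111 : f (b 1) (b 1) (b 1) = 0 := by
    conv_lhs => rw [hrep (f (b 1) (b 1) (b 1))]
    rw [z111a, z111b]; simp
  -- unipotent element
  set U : V →ₗ[F] V := Matrix.toLin b b !![(1:F), 1; 0, 1] with hU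
  have hUf : ∀ u v w : V, f (U u) (U v) (U w) = U (f u v w) := by
    rw [hU]
    exact hkey _ (by rw [Matrix.det_fin_two_of]; norm_num)
  have hU0 : U (b 0) = b 0 := by
    rw [hU, Matrix.toLin_self, Fin.sum_univ_two]; simp
  have hU1 : U (b 1) = b 0 + b 1 := by
    rw [hU, Matrix.toLin_self, Fin.sum_univ_two]; simp
  have uni1 : β = -(2 * α) := by
    have E := hUf (b 0) (b 1) (b 1)
    rw [hU0, hU1] at E
    simp only [map_add, LinearMap.add_apply] at E
    rw [g000, g001, g010, g011] at E
    rw [map_smul, hU1] at E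
    have E0 := congrArg (fun x => b.repr x 0) E
    simp only [map_add, map_smul, map_zero, map_neg, Finsupp.add_apply, Finsupp.smul_apply,
      Finsupp.coe_zero, Pi.zero_apply, Finsupp.neg_apply, smul_eq_mul, Module.Basis.repr_self,
      Finsupp.single_apply, one_ne_zero, zero_ne_one, reduceIte, mul_one, mul_zero,
      add_zero, zero_add] at E0
    linear_combination E0
  have uni2 : β = -(2 * α') := by
    have E := hUf (b 1) (b 0) (b 1)
    rw [hU0, hU1] at E
    simp only [map_add, LinearMap.add_apply] at E
    rw [g000, g001, g100, g101] at E
    rw [map_smul, hU1] at E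
    have E0 := congrArg (fun x => b.repr x 0) E
    simp only [map_add, map_smul, map_zero, map_neg, Finsupp.add_apply, Finsupp.smul_apply,
      Finsupp.coe_zero, Pi.zero_apply, Finsupp.neg_apply, smul_eq_mul, Module.Basis.repr_self,
      Finsupp.single_apply, one_ne_zero, zero_ne_one, reduceIte, mul_one, mul_zero,
      add_zero, zero_add] at E0
    linear_combination E0
  have uni3 : γ = α + α' := by
    have E := hUf (b 1) (b 1) (b 0)
    rw [hU0, hU1] at E
    simp only [map_add, LinearMap.add_apply] at E
    rw [g000, g010, g100, g110] at E
    rw [map_smul, hU1] at E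
    have E0 := congrArg (fun x => b.repr x 0) E
    simp only [map_add, map_smul, map_zero, map_neg, Finsupp.add_apply, Finsupp.smul_apply,
      Finsupp.coe_zero, Pi.zero_apply, Finsupp.neg_apply, smul_eq_mul, Module.Basis.repr_self,
      Finsupp.single_apply, one_ne_zero, zero_ne_one, reduceIte, mul_one, mul_zero,
      add_zero, zero_add] at E0
    linear_combination -E0
  have hαα' : α' = α := by linear_combination (uni2 - uni1) / 2
  have hγ : γ = 2 * α := by rw [uni3, hαα']; ring
  rw [hαα'] at g100 g101
  rw [hγ] at g110
  rw [uni1] at g001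
  -- final verification
  refine ⟨2 * α, ?_⟩
  intro u v
  ext w
  rw [hrep u, hrep v, hrep w]
  simp only [map_add, map_smul, LinearMap.add_apply, LinearMap.smul_apply, sMap_apply,
    g000, g001, g010, g011, g100, g101, g110, g111, w00, w01, w10, w11, smul_eq_mul,
    smul_add, smul_smul, smul_zero, mul_zero, zero_smul, add_zero, zero_add, mul_one,
    mul_neg, neg_smul, one_smul]
  module
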